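/- Let u satisfy Assumption 2 and suppose T^u_i(x) = argmin_{y_i ∈ ℝ^{n_i}} u_i(y_i;x) + λ_i‖y_i‖₀ is attained. Then for any x ∈ ℝⁿ, any i ∈ [N], and any index j in the support of T^u_i(x), one has |(T^u_i(x))_{(j)}|² ≥ 2λ_i / M_i. -/

import Mathlib

open scoped RealInnerProductSpace
open Finset

/-- The weighted ℓ₀ quasinorm `‖x‖_{0,λ}`. -/
noncomputable def l0norm {n N : ℕ} (blk : Fin n → Fin N) (lam : Fin N → ℝ)
    (x : EuclideanSpace ℝ (Fin n)) : ℝ :=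
  ∑ j, if x j ≠ 0 then lam (blk j) else 0

/-- Membership in `I(x) = supp(x) ∪ {j ∈ 𝒮ᵢ : λᵢ = 0}`. -/
def InIset {n N : ℕ} (blk : Fin n → Fin N) (lam : Fin N → ℝ)
    (x : EuclideanSpace ℝ (Fin n)) (j : Fin n) : Prop :=
  x j ≠ 0 ∨ lam (blk j) = 0

/-- Block restriction `xᵢ = Uᵢᵀ x`. -/
noncomputable def blkProj {n N : ℕ} (blk : Fin n → Fin N) (i : Fin N)
    (x : EuclideanSpace ℝ (Fin n)) : EuclideanSpace ℝ {j : Fin n // blk j = i} :=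
  WithLp.toLp 2 (fun j => x j.1)

/-- Block embedding `Uᵢ hᵢ`. -/
noncomputable def blkEmbed {n N : ℕ} (blk : Fin n → Fin N) (i : Fin N)
    (v : EuclideanSpace ℝ {j : Fin n // blk j = i}) : EuclideanSpace ℝ (Fin n) :=
  WithLp.toLp 2 (fun j => if h : blk j = i then v ⟨j, h⟩ else 0)

/-- Assumption 2 on the family of approximation functions `uᵢ(·;·)`, with gradients
(in the first argument) `guᵢ`, Lipschitz constants `Mᵢ > Lᵢ` and curvature constants
`μᵢ ∈ (0, Mᵢ - Lᵢ]`. -/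
structure ApproxAssumption {n N : ℕ} (blk : Fin n → Fin N)
    (f : EuclideanSpace ℝ (Fin n) → ℝ)
    (g : EuclideanSpace ℝ (Fin n) → EuclideanSpace ℝ (Fin n))
    (L : Fin N → ℝ)
    (u : ∀ i : Fin N, EuclideanSpace ℝ {j : Fin n // blk j = i} →
      EuclideanSpace ℝ (Fin n) → ℝ)
    (gu : ∀ i : Fin N, EuclideanSpace ℝ {j : Fin n // blk j = i} →
      EuclideanSpace ℝ (Fin n) → EuclideanSpace ℝ {j : Fin n // blk j = i})
    (M μ : Fin N → ℝ) : Prop where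
  strictConvexOn : ∀ i x, StrictConvexOn ℝ Set.univ (fun v => u i v x)
  hasGradient : ∀ i x v, HasGradientAt (fun w => u i w x) (gu i v x) v
  continuous_second : ∀ i v, Continuous fun x => u i v x
  value_at : ∀ i x, u i (blkProj blk i x) x = f x
  gradient_at : ∀ i x, gu i (blkProj blk i x) x = blkProj blk i (g x)
  lipschitz_grad : ∀ i x v w, ‖gu i v x - gu i w x‖ ≤ M i * ‖v - w‖
  M_gt_L : ∀ i, L i < M i
  mu_pos : ∀ i, 0 < μ i
  mu_le : ∀ i, μ i ≤ M i - L i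
  lower_bound : ∀ i x v,
    f (x + blkEmbed blk i (v - blkProj blk i x)) + μ i / 2 * ‖v - blkProj blk i x‖ ^ 2
      ≤ u i v x

/-- `z` is a `u`-strong local minimizer: `F(z) ≤ min_{yᵢ} uᵢ(yᵢ;z) + ‖z + Uᵢ(yᵢ - zᵢ)‖_{0,λ}`
for all blocks `i`. -/
def IsUStrongLocalMin {n N : ℕ} (blk : Fin n → Fin N) (lam : Fin N → ℝ)
    (f : EuclideanSpace ℝ (Fin n) → ℝ)
    (u : ∀ i : Fin N, EuclideanSpace ℝ {j : Fin n // blk j = i} →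
      EuclideanSpace ℝ (Fin n) → ℝ)
    (z : EuclideanSpace ℝ (Fin n)) : Prop :=
  ∀ (i : Fin N) (y : EuclideanSpace ℝ {j : Fin n // blk j = i}),
    f z + l0norm blk lam z ≤
      u i y z + l0norm blk lam (z + blkEmbed blk i (y - blkProj blk i z))

/-- The number of nonzero entries of a block vector, `‖yᵢ‖₀`, as a real number. -/
noncomputable def blkNnz {n N : ℕ} {blk : Fin n → Fin N} {i : Fin N}
    (v : EuclideanSpace ℝ {j : Fin n // blk j = i}) : ℝ :=
  ∑ j, if v j ≠ 0 then (1 : ℝ) else 0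

/-- Every nonzero component of the thresholding map `T^u_i(x)` satisfies
`|(T^u_i(x))_{(j)}|² ≥ 2λᵢ/Mᵢ`. -/
theorem statement9 {n N : ℕ} (blk : Fin n → Fin N) (lam : Fin N → ℝ)
    (hlam : ∀ i, 0 ≤ lam i)
    (f : EuclideanSpace ℝ (Fin n) → ℝ)
    (g : EuclideanSpace ℝ (Fin n) → EuclideanSpace ℝ (Fin n))
    (L : Fin N → ℝ) (hL : ∀ i, 0 < L i)
    (u : ∀ i : Fin N, EuclideanSpace ℝ {j : Fin n // blk j = i} →
      EuclideanSpace ℝ (Fin n) → ℝ)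
    (gu : ∀ i : Fin N, EuclideanSpace ℝ {j : Fin n // blk j = i} →
      EuclideanSpace ℝ (Fin n) → EuclideanSpace ℝ {j : Fin n // blk j = i})
    (M μ : Fin N → ℝ)
    (hu : ApproxAssumption blk f g L u gu M μ)
    (T : ∀ i : Fin N, EuclideanSpace ℝ (Fin n) →
      EuclideanSpace ℝ {j : Fin n // blk j = i})
    (hT : ∀ (i : Fin N) (x : EuclideanSpace ℝ (Fin n))
      (y : EuclideanSpace ℝ {j : Fin n // blk j = i}),
      u i (T i x) x + lam i * blkNnz (T i x) ≤ u i y x + lam i * blkNnz y) :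
    ∀ (x : EuclideanSpace ℝ (Fin n)) (i : Fin N)
      (j : {j : Fin n // blk j = i}), T i x j ≠ 0 →
      2 * lam i / M i ≤ (T i x j) ^ 2 := by
  intro x i j hj
  classical
  have hM : 0 < M i := (hL i).trans (hu.M_gt_L i)
  set T0 := T i x with hT0def
  set e : EuclideanSpace ℝ {j' : Fin n // blk j' = i} := EuclideanSpace.single j (1:ℝ) with he
  have hcoord : ∀ (t : ℝ) (k : {j' : Fin n // blk j' = i}),
      (T0 + t • e) k = T0 k + (if k = j then t else 0) := by
    intro t k
    have : (T0 + t • e) k = T0 k + t * (if k = j then (1:ℝ) else 0) := by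
      simp [he, EuclideanSpace.single_apply]
    rw [this]
    split <;> simp
  set d : ℝ → ℝ := fun t => gu i (T0 + t • e) x j with hd
  have hline : ∀ t : ℝ, HasDerivAt (fun s : ℝ => u i (T0 + s • e) x) (d t) t := by
    intro t
    have hg := hu.hasGradient i x (T0 + t • e)
    have hfd := hasGradientAt_iff_hasFDerivAt.mp hg
    have hc : HasDerivAt (fun s : ℝ => T0 + s • e) e t := by
      simpa using ((hasDerivAt_id t).smul_const e).const_add T0
    have hcomp := hfd.comp_hasDerivAt t hc
    have hval : (InnerProductSpace.toDual ℝ _ (gu i (T0 + t • e) x)) e = d t := by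
      simp [InnerProductSpace.toDual_apply_apply, he, EuclideanSpace.inner_single_right, hd]
    rw [hval] at hcomp
    exact hcomp
  have hnnz_eq : ∀ t : ℝ, |t| < |T0 j| → blkNnz (T0 + t • e) = blkNnz T0 := by
    intro t ht
    unfold blkNnz
    refine Finset.sum_congr rfl fun k _ => ?_
    rcases eq_or_ne k j with rfl | hk
    · have h1 : (T0 + t • e) k = T0 k + t := by rw [hcoord]; simp
      have h2 : T0 k + t ≠ 0 := by
        intro h0
        have : t = -(T0 k) := by linarith
        rw [this, abs_neg] at ht
        exact absurd ht (lt_irrefl _)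
      simp [h1, h2, hj]
    · have h1 : (T0 + t • e) k = T0 k := by rw [hcoord]; simp [hk]
      rw [h1]
  have hmin : IsLocalMin (fun s : ℝ => u i (T0 + s • e) x) 0 := by
    have habs : 0 < |T0 j| := abs_pos.mpr hj
    have : ∀ᶠ t in nhds (0:ℝ), u i (T0 + (0:ℝ) • e) x ≤ u i (T0 + t • e) x := by
      filter_upwards [Metric.ball_mem_nhds (0:ℝ) habs] with t ht
      have ht' : |t| < |T0 j| := by simpa [Real.dist_eq] using ht
      have h := hT i x (T0 + t • e)
      rw [hT0def] at h
      rw [hnnz_eq t ht'] at h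
      have : u i T0 x ≤ u i (T0 + t • e) x := by linarith
      simpa using this
    exact this
  have hd0 : d 0 = 0 := hmin.hasDerivAt_eq_zero (hline 0)
  have hdbound : ∀ t : ℝ, |d t| ≤ M i * |t| := by
    intro t
    have hsub : d t - d 0 =
        ⟪gu i (T0 + t • e) x - gu i (T0 + (0:ℝ) • e) x, e⟫ := by
      rw [he, inner_sub_left]
      simp [hd, EuclideanSpace.inner_single_right, starRingEnd_apply, star_trivial,
        one_mul]
      rw [he]
    have h1 : |d t - d 0| ≤ ‖gu i (T0 + t • e) x - gu i (T0 + (0:ℝ) • e) x‖ := by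
      rw [hsub]
      have hcs := abs_real_inner_le_norm
        (gu i (T0 + t • e) x - gu i (T0 + (0:ℝ) • e) x) e
      have hne : ‖e‖ = 1 := by rw [he]; simp [EuclideanSpace.norm_single]
      rw [hne, mul_one] at hcs
      exact hcs
    have h2 : ‖gu i (T0 + t • e) x - gu i (T0 + (0:ℝ) • e) x‖
        ≤ M i * ‖(T0 + t • e) - (T0 + (0:ℝ) • e)‖ := hu.lipschitz_grad i x _ _
    have h3 : ‖(T0 + t • e) - (T0 + (0:ℝ) • e)‖ = |t| := by
      have : (T0 + t • e) - (T0 + (0:ℝ) • e) = t • e := by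
        simp
      rw [this, norm_smul, Real.norm_eq_abs]
      simp [he, EuclideanSpace.norm_single]
    rw [hd0, sub_zero] at h1
    rw [h3] at h2
    exact h1.trans h2
  set ψ : ℝ → ℝ := fun t => u i T0 x + M i / 2 * t ^ 2 - u i (T0 + t • e) x with hψ
  have hψd : ∀ t, HasDerivAt ψ (M i * t - d t) t := by
    intro t
    have h1 : HasDerivAt (fun s : ℝ => u i T0 x + M i / 2 * s ^ 2) (M i * t) t := by
      have h2 := ((hasDerivAt_pow 2 t).const_mul (M i / 2)).const_add (u i T0 x)
      exact h2.congr_deriv (by ring)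
    exact h1.sub (hline t)
  have hψ0 : ψ 0 = 0 := by simp [hψ]
  have hdiff : ∀ t, DifferentiableAt ℝ ψ t := fun t => (hψd t).differentiableAt
  have hderiv : ∀ t, deriv ψ t = M i * t - d t := fun t => (hψd t).deriv
  set c : ℝ := -(T0 j) with hc
  have hψc : 0 ≤ ψ c := by
    rcases le_or_gt 0 c with h0c | h0c
    · have hmono : MonotoneOn ψ (Set.Ici 0) := by
        refine monotoneOn_of_deriv_nonneg (convex_Ici 0)
          (fun t _ => (hdiff t).continuousAt.continuousWithinAt)
          (fun t _ => (hdiff t).differentiableWithinAt)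
          (fun t ht => ?_)
        rw [interior_Ici] at ht
        have ht' : 0 < t := ht
        rw [hderiv]
        have hb := hdbound t
        rw [abs_of_pos ht'] at hb
        have : d t ≤ M i * t := le_trans (le_abs_self _) hb
        linarith
      have := hmono Set.self_mem_Ici (Set.mem_Ici.mpr h0c) h0c
      linarith
    · have hanti : AntitoneOn ψ (Set.Iic 0) := by
        refine antitoneOn_of_deriv_nonpos (convex_Iic 0)
          (fun t _ => (hdiff t).continuousAt.continuousWithinAt)
          (fun t _ => (hdiff t).differentiableWithinAt)
          (fun t ht => ?_)
        rw [interior_Iic] at ht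
        have ht' : t < 0 := ht
        rw [hderiv]
        have hb := hdbound t
        rw [abs_of_neg ht'] at hb
        have : -(d t) ≤ M i * (-t) := le_trans (neg_le_abs _) (by simpa using hb)
        nlinarith
      have := hanti (Set.mem_Iic.mpr h0c.le) Set.self_mem_Iic h0c.le
      linarith
  set y := T0 + c • e with hy
  have hyval : u i y x ≤ u i T0 x + M i / 2 * (T0 j) ^ 2 := by
    have h := hψc
    rw [hψ] at h
    have hcsq : c ^ 2 = (T0 j) ^ 2 := by rw [hc]; ring
    simp only at h
    nlinarith [h]
  have hyj : y j = 0 := by rw [hy, hcoord]; simp [hc]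
  have hyk : ∀ k, k ≠ j → y k = T0 k := by
    intro k hk; rw [hy, hcoord]; simp [hk]
  have hnnzy : blkNnz T0 = blkNnz y + 1 := by
    unfold blkNnz
    rw [← Finset.add_sum_erase _ _ (Finset.mem_univ j),
      ← Finset.add_sum_erase _ (fun k => if y k ≠ 0 then (1:ℝ) else 0) (Finset.mem_univ j)]
    have h1 : (if T0 j ≠ 0 then (1:ℝ) else 0) = 1 := by simp [hj]
    have h2 : (if y j ≠ 0 then (1:ℝ) else 0) = 0 := by simp [hyj]
    rw [h1, h2]
    have h3 : ∑ k ∈ Finset.univ.erase j, (if y k ≠ 0 then (1:ℝ) else 0)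
        = ∑ k ∈ Finset.univ.erase j, (if T0 k ≠ 0 then (1:ℝ) else 0) := by
      refine Finset.sum_congr rfl fun k hk => ?_
      rw [hyk k (Finset.ne_of_mem_erase hk)]
    rw [h3]
    ring
  have hopt := hT i x y
  rw [← hT0def, hnnzy, mul_add, mul_one] at hopt
  have hlamle : lam i ≤ u i y x - u i T0 x := by linarith
  have hkey : lam i ≤ M i / 2 * (T0 j) ^ 2 := by linarith
  rw [div_le_iff₀ hM]
  nlinarith
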